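/- arXiv:0907.5363 — 2 statements merged into one kernel-verified Lean document; each statement's English description precedes it below -/
import Mathlib

section
/- Let (X,d) be a compact metric space and φ : X → X a continuous map. Then for every integer m ≥ 1 one has C(φ^m) = C(φ), C̲(φ^m) = C̲(φ), and C*(φ^m) = C*(φ), where φ^m is the m-th iterate of φ. -/
open Filter Set Metric
open scoped ENNReal Topology

/-- The dynamical distance of order `n` associated with the map `φ`:
`d_n^φ(x,y) = max_{0 ≤ k ≤ n-1} d(φ^k x, φ^k y)`. -/
noncomputable def dynDist {X : Type*} [MetricSpace X] (φ : X → X) (n : ℕ) (x y : X) : ℝ :=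
  ⨆ k : Fin n, dist (φ^[(k : ℕ)] x) (φ^[(k : ℕ)] y)

section aux
variable {X : Type*} [MetricSpace X] {φ : X → X} {n : ℕ} {x y : X}

lemma dynDist_zero : dynDist φ 0 x y = 0 := by
  simp [dynDist, Real.iSup_of_isEmpty]

lemma dist_le_dynDist {k : ℕ} (hk : k < n) :
    dist (φ^[k] x) (φ^[k] y) ≤ dynDist φ n x y :=
  le_ciSup (f := fun k : Fin n => dist (φ^[(k : ℕ)] x) (φ^[(k : ℕ)] y))
    (Set.Finite.bddAbove (Set.finite_range _)) (⟨k, hk⟩ : Fin n)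

lemma dynDist_nonneg : 0 ≤ dynDist φ n x y := by
  rcases Nat.eq_zero_or_pos n with h | h
  · simp [h, dynDist_zero]
  · exact le_trans dist_nonneg (dist_le_dynDist h)

lemma dynDist_mono {n' : ℕ} (h : n ≤ n') : dynDist φ n x y ≤ dynDist φ n' x y := by
  rcases Nat.eq_zero_or_pos n with h0 | h0
  · simp [h0, dynDist_zero, dynDist_nonneg]
  · haveI : Nonempty (Fin n) := ⟨⟨0, h0⟩⟩
    exact ciSup_le fun k => dist_le_dynDist (lt_of_lt_of_le k.2 h)

lemma dynDist_lt_iff {ε : ℝ} (hε : 0 < ε) :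
    dynDist φ n x y < ε ↔ ∀ k < n, dist (φ^[k] x) (φ^[k] y) < ε := by
  constructor
  · exact fun h k hk => lt_of_le_of_lt (dist_le_dynDist hk) h
  · intro h
    rcases Nat.eq_zero_or_pos n with h0 | h0
    · simpa [h0, dynDist_zero] using hε
    · haveI : Nonempty (Fin n) := ⟨⟨0, h0⟩⟩
      obtain ⟨i, hi⟩ := Finite.exists_max
        (fun k : Fin n => dist (φ^[(k : ℕ)] x) (φ^[(k : ℕ)] y))
      exact lt_of_le_of_lt (ciSup_le hi) (h i i.2)

lemma dynDist_iterate_le {m : ℕ} (hm : 1 ≤ m) :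
    dynDist (φ^[m]) n x y ≤ dynDist φ (n * m) x y := by
  rcases Nat.eq_zero_or_pos n with h0 | h0
  · simp [h0, dynDist_zero, dynDist_nonneg]
  · haveI : Nonempty (Fin n) := ⟨⟨0, h0⟩⟩
    refine ciSup_le fun k => ?_
    have hk : (k : ℕ) * m < n * m := Nat.mul_lt_mul_of_lt_of_le k.2 le_rfl hm
    simpa [← Function.iterate_mul, Nat.mul_comm] using
      dist_le_dynDist (φ := φ) (x := x) (y := y) hk

end aux

section unif
variable {X : Type*} [MetricSpace X] [CompactSpace X] {φ : X → X}

/-- Uniform continuity of the first `m` iterates. -/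
lemma exists_eta (hφ : Continuous φ) {ε : ℝ} (hε : 0 < ε) (m : ℕ) :
    ∃ η > 0, η ≤ ε ∧ ∀ x y : X, dist x y < η →
      ∀ j < m, dist (φ^[j] x) (φ^[j] y) < ε := by
  rcases isEmpty_or_nonempty X with hX | hX
  · exact ⟨ε, hε, le_rfl, fun x => (IsEmpty.false x).elim⟩
  have hF : Continuous (fun x : X => fun j : Fin m => φ^[(j:ℕ)] x) :=
    continuous_pi fun j => hφ.iterate j
  have hUF : UniformContinuous (fun x : X => fun j : Fin m => φ^[(j:ℕ)] x) :=
    CompactSpace.uniformContinuous_of_continuous hF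
  obtain ⟨η, hη, h⟩ := Metric.uniformContinuous_iff.mp hUF ε hε
  refine ⟨min η ε, lt_min hη hε, min_le_right _ _, fun x y hxy j hj => ?_⟩
  have := h (lt_of_lt_of_le hxy (min_le_left _ _))
  calc dist (φ^[j] x) (φ^[j] y)
      = dist ((fun j : Fin m => φ^[(j:ℕ)] x) ⟨j, hj⟩)
          ((fun j : Fin m => φ^[(j:ℕ)] y) ⟨j, hj⟩) := rfl
    _ ≤ _ := dist_le_pi_dist (fun j : Fin m => φ^[(j:ℕ)] x)
          (fun j : Fin m => φ^[(j:ℕ)] y) ⟨j, hj⟩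
    _ < ε := this

lemma dynDist_iterate_lt {m : ℕ} {ε η : ℝ} (hε : 0 < ε) (hη : 0 < η)
    (hprop : ∀ x y : X, dist x y < η → ∀ j < m, dist (φ^[j] x) (φ^[j] y) < ε)
    {n : ℕ} {x y : X} (h : dynDist (φ^[m]) n x y < η) (hm : 1 ≤ m) :
    dynDist φ (n * m) x y < ε := by
  rw [dynDist_lt_iff hη] at h
  rw [dynDist_lt_iff hε]
  intro j hj
  have hq : j / m < n := Nat.div_lt_iff_lt_mul hm |>.mpr hj
  have hr : j % m < m := Nat.mod_lt _ hm
  have hd := h _ hq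
  have := hprop _ _ hd (j % m) hr
  have hrepr : φ^[j] = φ^[j % m] ∘ φ^[m * (j / m)] := by
    conv_lhs => rw [← Nat.mod_add_div j m]
    rw [Function.iterate_add]
  have hiter : φ^[m * (j/m)] = (φ^[m])^[j/m] := Function.iterate_mul φ m (j / m)
  rw [hrepr, hiter]
  exact this

end unif

/-- The open `(n,ε)`-ball centered at `x` for the dynamical distance `d_n^φ`. -/
def dynBall {X : Type*} [MetricSpace X] (φ : X → X) (n : ℕ) (x : X) (ε : ℝ) : Set X :=
  {y | dynDist φ n x y < ε}

/-- `G_n(Y,ε)`: the minimal number of `(n,ε)`-balls (centers anywhere in `X`)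
needed to cover `Y`. -/
noncomputable def coverNum {X : Type*} [MetricSpace X] (φ : X → X) (n : ℕ) (Y : Set X)
    (ε : ℝ) : ℕ :=
  sInf {m : ℕ | ∃ t : Finset X, t.card = m ∧ Y ⊆ ⋃ x ∈ t, dynBall φ n x ε}

section cover
variable {X : Type*} [MetricSpace X] [CompactSpace X] {φ : X → X} {ε η : ℝ} {n n' m : ℕ}

set_option linter.unusedSectionVars false

lemma dynBall_antitone (h : n ≤ n') {x : X} : dynBall φ n' x ε ⊆ dynBall φ n x ε :=
  fun _ hy => lt_of_le_of_lt (dynDist_mono h) hy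

/-- existence of finite covers -/
lemma coverSet_nonempty (hφ : Continuous φ) (hε : 0 < ε) (n : ℕ) :
    {m : ℕ | ∃ t : Finset X, t.card = m ∧ Set.univ ⊆ ⋃ x ∈ t, dynBall φ n x ε}.Nonempty := by
  obtain ⟨η, hη, -, hprop⟩ := exists_eta hφ hε n
  obtain ⟨t, -, htfin, hcov⟩ := finite_cover_balls_of_compact (isCompact_univ : IsCompact (Set.univ : Set X)) hη
  refine ⟨htfin.toFinset.card, htfin.toFinset, rfl, fun y hy => ?_⟩
  have hmem := hcov hy
  rw [Set.mem_iUnion₂] at hmem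
  obtain ⟨x, hx, hxy⟩ := hmem
  refine Set.mem_biUnion (htfin.mem_toFinset.mpr hx) ?_
  have : dynDist φ n x y < ε := by
    rw [dynDist_lt_iff hε]
    exact fun k hk => hprop x y (by simpa [dist_comm] using hxy) k hk
  exact this

lemma coverNum_mem (hφ : Continuous φ) (hε : 0 < ε) (n : ℕ) :
    ∃ t : Finset X, t.card = coverNum φ n Set.univ ε ∧
      Set.univ ⊆ ⋃ x ∈ t, dynBall φ n x ε :=
  Nat.sInf_mem (coverSet_nonempty hφ hε n)

lemma coverNum_le {t : Finset X} (h : Set.univ ⊆ ⋃ x ∈ t, dynBall φ n x ε) :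
    coverNum φ n Set.univ ε ≤ t.card :=
  Nat.sInf_le ⟨t, rfl, h⟩

lemma coverNum_pos [Nonempty X] (hφ : Continuous φ) (hε : 0 < ε) (n : ℕ) :
    1 ≤ coverNum φ n Set.univ ε := by
  obtain ⟨t, ht, hcov⟩ := coverNum_mem hφ hε n
  rcases Nat.eq_zero_or_pos (coverNum φ n Set.univ ε) with h0 | h1
  · rw [h0, Finset.card_eq_zero] at ht
    have hmem := hcov (Set.mem_univ (Classical.arbitrary X))
    rw [Set.mem_iUnion₂] at hmem
    obtain ⟨x, hx, -⟩ := hmem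
    simp [ht] at hx
  · exact h1

lemma coverNum_mono (hφ : Continuous φ) (hε : 0 < ε) (h : n ≤ n') :
    coverNum φ n Set.univ ε ≤ coverNum φ n' Set.univ ε := by
  obtain ⟨t, ht, hcov⟩ := coverNum_mem hφ hε n'
  rw [← ht]
  exact coverNum_le (hcov.trans (Set.iUnion₂_mono fun x _ => dynBall_antitone h))

lemma coverNum_iterate_le (hφ : Continuous φ) (hε : 0 < ε) (hm : 1 ≤ m) (n : ℕ) :
    coverNum (φ^[m]) n Set.univ ε ≤ coverNum φ (n * m) Set.univ ε := by
  obtain ⟨t, ht, hcov⟩ := coverNum_mem hφ hε (n * m)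
  rw [← ht]
  refine coverNum_le (hcov.trans (Set.iUnion₂_mono fun x _ y hy => ?_))
  exact lt_of_le_of_lt (dynDist_iterate_le hm) hy

lemma coverNum_le_iterate (hφ : Continuous φ) (hε : 0 < ε) (hη : 0 < η) (hm : 1 ≤ m)
    (hprop : ∀ x y : X, dist x y < η → ∀ j < m, dist (φ^[j] x) (φ^[j] y) < ε) (n : ℕ) :
    coverNum φ (n * m) Set.univ ε ≤ coverNum (φ^[m]) n Set.univ η := by
  obtain ⟨t, ht, hcov⟩ := coverNum_mem (hφ.iterate m) hη n
  rw [← ht]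
  refine coverNum_le (hcov.trans (Set.iUnion₂_mono fun x _ y hy => ?_))
  exact dynDist_iterate_lt hε hη hprop hy hm

end cover

section analytic

lemma limsup_comp_map {u : ℕ → ℝ≥0∞} {g : ℕ → ℕ} :
    Filter.limsup (fun n => u (g n)) Filter.atTop = Filter.limsup u (Filter.map g Filter.atTop) := by
  rw [Filter.limsup, Filter.limsup, Filter.map_map]
  rfl

lemma liminf_comp_map {u : ℕ → ℝ≥0∞} {g : ℕ → ℕ} :
    Filter.liminf (fun n => u (g n)) Filter.atTop = Filter.liminf u (Filter.map g Filter.atTop) := by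
  rw [Filter.liminf, Filter.liminf, Filter.map_map]
  rfl

lemma liminf_const_mul' {α : Type*} {f : Filter α} {u : α → ℝ≥0∞} {a : ℝ≥0∞}
    (ha_zero : a ≠ 0) (ha_top : a ≠ ⊤) :
    (f.liminf fun x : α => a * u x) = a * f.liminf u := by
  let g := fun x : ℝ≥0∞ => a * x
  have hg_bij : Function.Bijective g :=
    Function.bijective_iff_has_inverse.mpr
      ⟨fun x => a⁻¹ * x,
        ⟨fun x => by simp [g, ← mul_assoc, ENNReal.inv_mul_cancel ha_zero ha_top], fun x => by
          simp [g, ← mul_assoc, ENNReal.mul_inv_cancel ha_zero ha_top]⟩⟩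
  have hg_mono : StrictMono g :=
    Monotone.strictMono_of_injective
      (fun _ _ _ => by rwa [ENNReal.mul_le_mul_iff_right ha_zero ha_top]) hg_bij.1
  let g_iso := StrictMono.orderIsoOfSurjective g hg_mono hg_bij.2
  exact (OrderIso.liminf_apply g_iso).symm

/-- ratio manipulation for logarithms -/
lemma log_ratio_le {A δ : ℝ} (hA : 0 ≤ A) (hδ : 0 ≤ δ) {a b : ℕ} (ha : 2 ≤ a) (hb : 2 ≤ b)
    (hlog : Real.log b ≤ (1 + δ) * Real.log a) :
    A / Real.log a ≤ (1 + δ) * (A / Real.log b) := by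
  have hla : 0 < Real.log a := Real.log_pos (by exact_mod_cast ha)
  have hlb : 0 < Real.log b := Real.log_pos (by exact_mod_cast hb)
  rw [mul_div_assoc']
  rw [div_le_div_iff₀ hla hlb]
  nlinarith [mul_le_mul_of_nonneg_left hlog hA]

end analytic

section key

/-- eventual bound `log C ≤ δ log (h n)` for `h → ∞`. -/
lemma eventually_log_le {h : ℕ → ℕ} (hh : Filter.Tendsto h Filter.atTop Filter.atTop)
    {δ : ℝ} (hδ : 0 < δ) (C : ℕ) :
    ∀ᶠ n in Filter.atTop, Real.log C ≤ δ * Real.log (h n) := by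
  have h1 : Filter.Tendsto (fun n : ℕ => δ * Real.log (h n)) Filter.atTop Filter.atTop := by
    apply Filter.Tendsto.const_mul_atTop hδ
    exact (Real.tendsto_log_atTop.comp tendsto_natCast_atTop_atTop).comp hh
  exact h1.eventually_ge_atTop _

/-- pointwise core estimate -/
lemma core_est {G H : ℕ → ℕ} {a b : ℕ} {δ : ℝ} (hδ : 0 ≤ δ)
    (ha : 2 ≤ a) (hb : 2 ≤ b) (hGH : G a ≤ H b)
    (hlog : Real.log b ≤ (1 + δ) * Real.log a) :
    ENNReal.ofReal (Real.log (G a) / Real.log a) ≤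
      ENNReal.ofReal (1 + δ) * ENNReal.ofReal (Real.log (H b) / Real.log b) := by
  have hla : 0 < Real.log a := Real.log_pos (by exact_mod_cast ha)
  have hA : 0 ≤ Real.log (H b) := Real.log_natCast_nonneg _
  have h6 : Real.log (G a) ≤ Real.log (H b) := by
    rcases Nat.eq_zero_or_pos (G a) with h | h
    · simpa [h] using hA
    · exact Real.log_le_log (by exact_mod_cast h) (by exact_mod_cast hGH)
  have step1 : Real.log (G a) / Real.log a ≤ Real.log (H b) / Real.log a := by
    gcongr
  have step2 : Real.log (H b) / Real.log a ≤ (1 + δ) * (Real.log (H b) / Real.log b) :=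
    log_ratio_le hA hδ ha hb hlog
  rw [← ENNReal.ofReal_mul (by linarith : (0:ℝ) ≤ 1 + δ)]
  exact ENNReal.ofReal_le_ofReal (step1.trans step2)

end key


section key2

lemma key_final {A L : ℝ≥0∞}
    (main : ∀ δ : ℝ, 0 < δ → A ≤ ENNReal.ofReal (1 + δ) * L) : A ≤ L := by
  rcases eq_or_ne L ⊤ with h | h
  · simp [h]
  · have h1 : Filter.Tendsto (fun k : ℕ => (1 + 1 / ((k : ℝ) + 1))) Filter.atTop (𝓝 1) := by
      have := tendsto_one_div_add_atTop_nhds_zero_nat (𝕜 := ℝ)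
      simpa using tendsto_const_nhds.add this
    have h2 : Filter.Tendsto (fun k : ℕ => ENNReal.ofReal (1 + 1 / ((k : ℝ) + 1)))
        Filter.atTop (𝓝 (ENNReal.ofReal 1)) := (ENNReal.continuous_ofReal.tendsto 1).comp h1
    have htend : Filter.Tendsto (fun k : ℕ => ENNReal.ofReal (1 + 1 / ((k : ℝ) + 1)) * L)
        Filter.atTop (𝓝 L) := by
      simpa [ENNReal.ofReal_one] using ENNReal.Tendsto.mul_const h2 (Or.inr h)
    exact ge_of_tendsto htend (Filter.Eventually.of_forall fun k => main _ (by positivity))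

lemma key_limsup {G H : ℕ → ℕ} {g : ℕ → ℕ} {C : ℕ} (hC : 1 ≤ C)
    (hg_top : Filter.Tendsto g Filter.atTop Filter.atTop)
    (hgC : ∀ᶠ n in Filter.atTop, g n ≤ C * n)
    (hGH : ∀ᶠ n in Filter.atTop, G n ≤ H (g n)) :
    Filter.limsup (fun n : ℕ => ENNReal.ofReal (Real.log (G n) / Real.log n)) Filter.atTop ≤
      Filter.limsup (fun n : ℕ => ENNReal.ofReal (Real.log (H n) / Real.log n)) Filter.atTop := by
  set v' : ℕ → ℝ≥0∞ := fun n => ENNReal.ofReal (Real.log (H n) / Real.log n) with hv'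
  refine key_final fun δ hδ => ?_
  have hg2 : ∀ᶠ n in Filter.atTop, 2 ≤ g n := hg_top.eventually_ge_atTop 2
  have hloggrow := eventually_log_le Filter.tendsto_id hδ C
  have hev : ∀ᶠ n in Filter.atTop,
      ENNReal.ofReal (Real.log (G n) / Real.log n) ≤ ENNReal.ofReal (1 + δ) * v' (g n) := by
    filter_upwards [hgC, hGH, hg2, hloggrow, Filter.eventually_ge_atTop 2]
      with n h1 h2 h3 h4 h5
    refine core_est hδ.le h5 h3 h2 ?_
    have hgpos : (0:ℝ) < (g n : ℝ) := by positivity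
    have hlogle : Real.log (g n) ≤ Real.log ((C : ℝ) * (n : ℝ)) := by
      apply Real.log_le_log (by exact_mod_cast lt_of_lt_of_le two_pos h3)
      exact_mod_cast h1
    have hCn : Real.log ((C : ℝ) * (n : ℝ)) = Real.log C + Real.log n := by
      rw [Real.log_mul (by exact_mod_cast hC.trans_lt' zero_lt_one |>.ne') (by positivity)]
    calc Real.log (g n) ≤ Real.log C + Real.log n := by rw [← hCn]; exact hlogle
      _ ≤ δ * Real.log n + Real.log n := by simp only [id] at h4; linarith [h4]
      _ = (1 + δ) * Real.log n := by ring
  calc Filter.limsup (fun n : ℕ => ENNReal.ofReal (Real.log (G n) / Real.log n)) Filter.atTop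
      ≤ Filter.limsup (fun n => ENNReal.ofReal (1 + δ) * v' (g n)) Filter.atTop :=
        Filter.limsup_le_limsup hev
    _ = ENNReal.ofReal (1 + δ) * Filter.limsup (fun n => v' (g n)) Filter.atTop :=
        ENNReal.limsup_const_mul_of_ne_top ENNReal.ofReal_ne_top
    _ ≤ ENNReal.ofReal (1 + δ) * Filter.limsup v' Filter.atTop := by
        refine mul_le_mul_right ?_ _
        rw [limsup_comp_map]
        exact Filter.limsup_le_limsup_of_le hg_top

lemma key_liminf {G H : ℕ → ℕ} {h : ℕ → ℕ} {C : ℕ} (hC : 1 ≤ C)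
    (hh_top : Filter.Tendsto h Filter.atTop Filter.atTop)
    (hhC : ∀ᶠ n in Filter.atTop, n ≤ C * h n)
    (hGH : ∀ᶠ n in Filter.atTop, G (h n) ≤ H n) :
    Filter.liminf (fun n : ℕ => ENNReal.ofReal (Real.log (G n) / Real.log n)) Filter.atTop ≤
      Filter.liminf (fun n : ℕ => ENNReal.ofReal (Real.log (H n) / Real.log n)) Filter.atTop := by
  set u' : ℕ → ℝ≥0∞ := fun n => ENNReal.ofReal (Real.log (G n) / Real.log n) with hu'
  set v' : ℕ → ℝ≥0∞ := fun n => ENNReal.ofReal (Real.log (H n) / Real.log n) with hv'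
  refine key_final fun δ hδ => ?_
  have hh2 : ∀ᶠ n in Filter.atTop, 2 ≤ h n := hh_top.eventually_ge_atTop 2
  have hloggrow := eventually_log_le hh_top hδ C
  have hev : ∀ᶠ n in Filter.atTop, u' (h n) ≤ ENNReal.ofReal (1 + δ) * v' n := by
    filter_upwards [hhC, hGH, hh2, hloggrow, Filter.eventually_ge_atTop 2]
      with n h1 h2 h3 h4 h5
    refine core_est hδ.le h3 h5 h2 ?_
    have hlogle : Real.log n ≤ Real.log ((C : ℝ) * (h n : ℝ)) := by
      apply Real.log_le_log (by positivity : (0:ℝ) < (n:ℝ))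
      exact_mod_cast h1
    have hCn : Real.log ((C : ℝ) * (h n : ℝ)) = Real.log C + Real.log (h n) := by
      rw [Real.log_mul (by exact_mod_cast hC.trans_lt' zero_lt_one |>.ne') (by positivity)]
    calc Real.log n ≤ Real.log C + Real.log (h n) := by rw [← hCn]; exact hlogle
      _ ≤ δ * Real.log (h n) + Real.log (h n) := by linarith [h4]
      _ = (1 + δ) * Real.log (h n) := by ring
  calc Filter.liminf u' Filter.atTop ≤ Filter.liminf u' (Filter.map h Filter.atTop) :=
        Filter.liminf_le_liminf_of_le hh_top
    _ = Filter.liminf (fun n => u' (h n)) Filter.atTop := liminf_comp_map.symm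
    _ ≤ Filter.liminf (fun n => ENNReal.ofReal (1 + δ) * v' n) Filter.atTop :=
        Filter.liminf_le_liminf hev
    _ = ENNReal.ofReal (1 + δ) * Filter.liminf v' Filter.atTop :=
        liminf_const_mul' (by simp only [ne_eq, ENNReal.ofReal_eq_zero, not_le]; linarith : ENNReal.ofReal (1 + δ) ≠ 0) ENNReal.ofReal_ne_top

end key2

/-- The (upper) complexity index `C(φ,Y) = sup_{ε>0} limsup_n log G_n(Y,ε) / log n`. -/
noncomputable def upperComplexity {X : Type*} [MetricSpace X] (φ : X → X) (Y : Set X) : ℝ≥0∞ :=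
  ⨆ (ε : ℝ) (_ : 0 < ε),
    Filter.limsup
      (fun n : ℕ => ENNReal.ofReal (Real.log (coverNum φ n Y ε) / Real.log n)) Filter.atTop

/-- The lower complexity index `C̲(φ,Y) = sup_{ε>0} liminf_n log G_n(Y,ε) / log n`. -/
noncomputable def lowerComplexity {X : Type*} [MetricSpace X] (φ : X → X) (Y : Set X) : ℝ≥0∞ :=
  ⨆ (ε : ℝ) (_ : 0 < ε),
    Filter.liminf
      (fun n : ℕ => ENNReal.ofReal (Real.log (coverNum φ n Y ε) / Real.log n)) Filter.atTop

section assemble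
variable {X : Type*} [MetricSpace X] [CompactSpace X] {φ : X → X} {m : ℕ}

lemma tendsto_div_add_one (hm : 1 ≤ m) :
    Filter.Tendsto (fun k : ℕ => k / m + 1) Filter.atTop Filter.atTop := by
  apply Filter.tendsto_atTop_atTop.mpr
  intro b
  exact ⟨b * m, fun k hk => le_trans ((Nat.le_div_iff_mul_le hm).mpr hk) (Nat.le_succ _)⟩

lemma tendsto_div (hm : 1 ≤ m) :
    Filter.Tendsto (fun k : ℕ => k / m) Filter.atTop Filter.atTop := by
  apply Filter.tendsto_atTop_atTop.mpr
  intro b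
  exact ⟨b * m, fun k hk => (Nat.le_div_iff_mul_le hm).mpr hk⟩

lemma upperComplexity_iterate (hφ : Continuous φ) (hm : 1 ≤ m) :
    upperComplexity (φ^[m]) Set.univ = upperComplexity φ Set.univ := by
  apply le_antisymm
  · refine iSup₂_le fun ε hε => ?_
    refine le_trans ?_ (le_iSup₂ (f := fun ε _ => Filter.limsup (fun n : ℕ =>
      ENNReal.ofReal (Real.log (coverNum φ n Set.univ ε) / Real.log n)) Filter.atTop) ε hε)
    refine key_limsup (g := fun n => n * m) (C := m) hm ?_ ?_ ?_
    · exact Filter.tendsto_atTop_atTop.mpr fun b =>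
        ⟨b, fun k hk => le_trans hk (Nat.le_mul_of_pos_right k hm)⟩
    · exact Filter.Eventually.of_forall fun n => le_of_eq (Nat.mul_comm n m)
    · exact Filter.Eventually.of_forall fun n => coverNum_iterate_le hφ hε hm n
  · refine iSup₂_le fun ε hε => ?_
    obtain ⟨η, hη, hηε, hprop⟩ := exists_eta hφ hε m
    refine le_trans ?_ (le_iSup₂ (f := fun ε _ => Filter.limsup (fun n : ℕ =>
      ENNReal.ofReal (Real.log (coverNum (φ^[m]) n Set.univ ε) / Real.log n)) Filter.atTop) η hη)
    refine key_limsup (g := fun k => k / m + 1) (C := 2) one_le_two (tendsto_div_add_one hm) ?_ ?_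
    · filter_upwards [Filter.eventually_ge_atTop 1] with k hk
      have : k / m ≤ k := Nat.div_le_self k m
      omega
    · refine Filter.Eventually.of_forall fun k => ?_
      have h1 : k ≤ (k / m + 1) * m := by
        have hdm := Nat.div_add_mod k m
        have hmod : k % m < m := Nat.mod_lt _ hm
        calc k = m * (k / m) + k % m := hdm.symm
          _ ≤ m * (k / m) + m := by omega
          _ = (k / m + 1) * m := by ring
      exact (coverNum_mono hφ hε h1).trans (coverNum_le_iterate hφ hε hη hm hprop _)

lemma lowerComplexity_iterate (hφ : Continuous φ) (hm : 1 ≤ m) :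
    lowerComplexity (φ^[m]) Set.univ = lowerComplexity φ Set.univ := by
  apply le_antisymm
  · refine iSup₂_le fun ε hε => ?_
    refine le_trans ?_ (le_iSup₂ (f := fun ε _ => Filter.liminf (fun n : ℕ =>
      ENNReal.ofReal (Real.log (coverNum φ n Set.univ ε) / Real.log n)) Filter.atTop) ε hε)
    refine key_liminf (h := fun k => k / m) (C := 2 * m) (by omega) (tendsto_div hm) ?_ ?_
    · filter_upwards [Filter.eventually_ge_atTop m] with k hk
      have h1 : m * (k / m) + k % m = k := Nat.div_add_mod k m
      have h2 : k % m < m := Nat.mod_lt _ hm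
      have h3 : 1 ≤ k / m := (Nat.le_div_iff_mul_le hm).mpr (by omega)
      calc k = m * (k / m) + k % m := h1.symm
        _ ≤ m * (k / m) + m * (k / m) := by
            have : k % m ≤ m * (k / m) := le_trans h2.le (Nat.le_mul_of_pos_right m h3)
            omega
        _ = 2 * m * (k / m) := by ring
    · refine Filter.Eventually.of_forall fun k => ?_
      exact (coverNum_iterate_le hφ hε hm _).trans
        (coverNum_mono hφ hε (Nat.div_mul_le_self k m))
  · refine iSup₂_le fun ε hε => ?_
    obtain ⟨η, hη, hηε, hprop⟩ := exists_eta hφ hε m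
    refine le_trans ?_ (le_iSup₂ (f := fun ε _ => Filter.liminf (fun n : ℕ =>
      ENNReal.ofReal (Real.log (coverNum (φ^[m]) n Set.univ ε) / Real.log n)) Filter.atTop) η hη)
    refine key_liminf (h := fun n => n * m) (C := 1) le_rfl ?_ ?_ ?_
    · exact Filter.tendsto_atTop_atTop.mpr fun b =>
        ⟨b, fun k hk => le_trans hk (Nat.le_mul_of_pos_right k hm)⟩
    · exact Filter.Eventually.of_forall fun n => by
        simpa using Nat.le_mul_of_pos_right n hm
    · exact Filter.Eventually.of_forall fun n => coverNum_le_iterate hφ hε hη hm hprop n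

end assemble

/-- The weight `M(C,s) = Σ_i (1/n_i)^s` of a (countable) family of dynamical balls, the
family being encoded as a set of pairs `(center, order)`. -/
noncomputable def coverWeight {X : Type*} [MetricSpace X] (s : ℝ) (S : Set (X × ℕ)) : ℝ≥0∞ :=
  ∑' p : S, ((p : X × ℕ).2 : ℝ≥0∞)⁻¹ ^ s

/-- A covering of `Y` of order `≥ N` at scale `ε`: a countable family of `(n_i,ε)`-balls
with all `n_i ≥ N` whose union contains `Y`. -/
def IsDynCover {X : Type*} [MetricSpace X] (φ : X → X) (Y : Set X) (ε : ℝ) (N : ℕ)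
    (S : Set (X × ℕ)) : Prop :=
  S.Countable ∧ (∀ p ∈ S, N ≤ p.2) ∧ Y ⊆ ⋃ p ∈ S, dynBall φ p.2 p.1 ε

/-- `δ(Y,ε,s,N)`: the infimum of the weights of coverings of `Y` of order `≥ N`. -/
noncomputable def dynDelta {X : Type*} [MetricSpace X] (φ : X → X) (Y : Set X) (ε s : ℝ)
    (N : ℕ) : ℝ≥0∞ :=
  ⨅ (S : Set (X × ℕ)) (_ : IsDynCover φ Y ε N S), coverWeight s S

/-- `Δ(Y,ε,s) = sup_{N ≥ 1} δ(Y,ε,s,N)`. -/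
noncomputable def dynDeltaSup {X : Type*} [MetricSpace X] (φ : X → X) (Y : Set X)
    (ε s : ℝ) : ℝ≥0∞ :=
  ⨆ (N : ℕ) (_ : 1 ≤ N), dynDelta φ Y ε s N

/-- The critical value `s_c(Y,ε) = inf {s ≥ 0 | Δ(Y,ε,s) = 0}`, as an element of `[0,∞]`
(with `inf ∅ = +∞`). -/
noncomputable def critVal {X : Type*} [MetricSpace X] (φ : X → X) (Y : Set X) (ε : ℝ) : ℝ≥0∞ :=
  sInf {c : ℝ≥0∞ | ∃ s : ℝ, 0 ≤ s ∧ c = ENNReal.ofReal s ∧ dynDeltaSup φ Y ε s = 0}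

/-- The weak complexity index `C*(φ,Y) = sup_{ε>0} s_c(Y,ε)`. -/
noncomputable def weakComplexity {X : Type*} [MetricSpace X] (φ : X → X) (Y : Set X) : ℝ≥0∞ :=
  ⨆ (ε : ℝ) (_ : 0 < ε), critVal φ Y ε

section weak
variable {X : Type*} [MetricSpace X] [CompactSpace X] {φ : X → X} {m : ℕ} {ε η s : ℝ}
  {N : ℕ}

set_option linter.unusedSectionVars false

lemma dynDelta_le_of_cover {Y : Set X} {S : Set (X × ℕ)} (h : IsDynCover φ Y ε N S) :
    dynDelta φ Y ε s N ≤ coverWeight s S :=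
  iInf₂_le S h

lemma exists_cover_of_delta_zero {Y : Set X} (h : dynDelta φ Y ε s N = 0)
    {θ : ℝ≥0∞} (hθ : 0 < θ) :
    ∃ S : Set (X × ℕ), IsDynCover φ Y ε N S ∧ coverWeight s S < θ := by
  have : dynDelta φ Y ε s N < θ := h ▸ hθ
  rw [dynDelta, iInf_lt_iff] at this
  obtain ⟨S, hS⟩ := this
  rw [iInf_lt_iff] at hS
  obtain ⟨h1, h2⟩ := hS
  exact ⟨S, h1, h2⟩

lemma dynDeltaSup_eq_zero_iff {Y : Set X} :
    dynDeltaSup φ Y ε s = 0 ↔ ∀ N, 1 ≤ N → dynDelta φ Y ε s N = 0 := by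
  simp [dynDeltaSup, ENNReal.iSup_eq_zero]

/-- Transform a `φ`-cover into a `φ^[m]`-cover, dividing the orders by `m`. -/
lemma weight_image_div (hm : 1 ≤ m) (hs : 0 ≤ s) {S : Set (X × ℕ)}
    (horder : ∀ p ∈ S, 2 * m ≤ p.2) :
    coverWeight s ((fun p : X × ℕ => (p.1, p.2 / m)) '' S) ≤
      ((2 * m : ℕ) : ℝ≥0∞) ^ s * coverWeight s S := by
  set f : X × ℕ → X × ℕ := fun p => (p.1, p.2 / m) with hf
  have hσ : Function.Surjective
      (fun p : S => (⟨f p, Set.mem_image_of_mem f p.2⟩ : f '' S)) := by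
    rintro ⟨q, hq⟩
    obtain ⟨p, hp, hpq⟩ := hq
    exact ⟨⟨p, hp⟩, Subtype.ext hpq⟩
  calc coverWeight s (f '' S)
      ≤ ∑' p : S, (((f p).2 : ℝ≥0∞))⁻¹ ^ s :=
        ENNReal.tsum_le_tsum_comp_of_surjective hσ _
    _ ≤ ∑' p : S, ((2 * m : ℕ) : ℝ≥0∞) ^ s * (((p : X × ℕ).2 : ℝ≥0∞))⁻¹ ^ s := by
        refine ENNReal.tsum_le_tsum fun p => ?_
        have h2m : 2 * m ≤ (p : X × ℕ).2 := horder _ p.2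
        set n := (p : X × ℕ).2 with hn
        set q := n / m with hq
        have hq1 : 1 ≤ q := (Nat.le_div_iff_mul_le hm).mpr (by omega)
        have hn2 : n ≤ 2 * m * q := by
          have hdm := Nat.div_add_mod n m
          have hmod : n % m < m := Nat.mod_lt _ hm
          have : m ≤ m * q := Nat.le_mul_of_pos_right m hq1
          calc n = m * q + n % m := hdm.symm
            _ ≤ m * q + m * q := by omega
            _ = 2 * m * q := by ring
        have hq0 : ((q : ℕ) : ℝ≥0∞) ≠ 0 := by
          exact_mod_cast Nat.one_le_iff_ne_zero.mp hq1
        have hqt : ((q : ℕ) : ℝ≥0∞) ≠ ⊤ := ENNReal.natCast_ne_top q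
        have hn0 : ((n : ℕ) : ℝ≥0∞) ≠ 0 := by
          have : (1:ℕ) ≤ n := by omega
          exact_mod_cast Nat.one_le_iff_ne_zero.mp this
        have hnt : ((n : ℕ) : ℝ≥0∞) ≠ ⊤ := ENNReal.natCast_ne_top n
        have hinv : ((q : ℕ) : ℝ≥0∞)⁻¹ ≤ ((2 * m : ℕ) : ℝ≥0∞) * ((n : ℕ) : ℝ≥0∞)⁻¹ := by
          have hcast : ((n : ℕ) : ℝ≥0∞) ≤ ((2 * m * q : ℕ) : ℝ≥0∞) := by exact_mod_cast hn2
          have h1 : ((q : ℕ) : ℝ≥0∞)⁻¹ * n ≤ ((q : ℕ) : ℝ≥0∞)⁻¹ * ((2 * m * q : ℕ) : ℝ≥0∞) :=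
            mul_le_mul_right hcast _
          have h2 : ((q : ℕ) : ℝ≥0∞)⁻¹ * ((2 * m * q : ℕ) : ℝ≥0∞) = ((2 * m : ℕ) : ℝ≥0∞) := by
            push_cast
            calc ((q : ℕ) : ℝ≥0∞)⁻¹ * (2 * m * q)
                = 2 * m * ((q : ℕ) * ((q : ℕ) : ℝ≥0∞)⁻¹) := by ring
              _ = 2 * m := by rw [ENNReal.mul_inv_cancel hq0 hqt, mul_one]
          have h3 : ((q : ℕ) : ℝ≥0∞)⁻¹ ≤ ((2 * m : ℕ) : ℝ≥0∞) / ((n : ℕ) : ℝ≥0∞) :=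
            (ENNReal.le_div_iff_mul_le (Or.inl hn0) (Or.inl hnt)).mpr (h1.trans_eq h2)
          rwa [div_eq_mul_inv] at h3
        calc (((f p).2 : ℕ) : ℝ≥0∞)⁻¹ ^ s = ((q : ℕ) : ℝ≥0∞)⁻¹ ^ s := rfl
          _ ≤ (((2 * m : ℕ) : ℝ≥0∞) * ((n : ℕ) : ℝ≥0∞)⁻¹) ^ s := ENNReal.rpow_le_rpow hinv hs
          _ = ((2 * m : ℕ) : ℝ≥0∞) ^ s * (((n : ℕ) : ℝ≥0∞)⁻¹) ^ s :=
            ENNReal.mul_rpow_of_nonneg _ _ hs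
    _ = ((2 * m : ℕ) : ℝ≥0∞) ^ s * coverWeight s S := ENNReal.tsum_mul_left

end weak


section weak2
variable {X : Type*} [MetricSpace X] [CompactSpace X] {φ : X → X} {m : ℕ} {ε η s : ℝ}
  {N : ℕ}

set_option linter.unusedSectionVars false

lemma isDynCover_image_div (hm : 1 ≤ m) {S : Set (X × ℕ)}
    (hS : IsDynCover φ Set.univ ε (max N 2 * m) S) :
    IsDynCover (φ^[m]) Set.univ ε N ((fun p : X × ℕ => (p.1, p.2 / m)) '' S) := by
  obtain ⟨hcount, horder, hcover⟩ := hS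
  refine ⟨hcount.image _, ?_, ?_⟩
  · rintro p ⟨q, hq, rfl⟩
    have h1 := horder q hq
    have h2 : N * m ≤ q.2 := le_trans (Nat.mul_le_mul_right m (le_max_left N 2)) h1
    exact (Nat.le_div_iff_mul_le hm).mpr h2
  · intro x hx
    obtain ⟨p, hp, hball⟩ := by
      have := hcover hx
      rw [Set.mem_iUnion₂] at this
      exact this
    rw [Set.mem_iUnion₂]
    refine ⟨(p.1, p.2 / m), Set.mem_image_of_mem _ hp, ?_⟩
    have hle : dynDist (φ^[m]) (p.2 / m) p.1 x ≤ dynDist φ p.2 p.1 x :=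
      le_trans (dynDist_iterate_le hm) (dynDist_mono (Nat.div_mul_le_self p.2 m))
    exact lt_of_le_of_lt hle hball

lemma isDynCover_image_mul (hm : 1 ≤ m) (hε : 0 < ε) (hη : 0 < η)
    (hprop : ∀ x y : X, dist x y < η → ∀ j < m, dist (φ^[j] x) (φ^[j] y) < ε)
    {S : Set (X × ℕ)} (hS : IsDynCover (φ^[m]) Set.univ η N S) :
    IsDynCover φ Set.univ ε N ((fun p : X × ℕ => (p.1, p.2 * m)) '' S) := by
  obtain ⟨hcount, horder, hcover⟩ := hS
  refine ⟨hcount.image _, ?_, ?_⟩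
  · rintro p ⟨q, hq, rfl⟩
    exact le_trans (horder q hq) (Nat.le_mul_of_pos_right _ hm)
  · intro x hx
    obtain ⟨p, hp, hball⟩ := by
      have := hcover hx
      rw [Set.mem_iUnion₂] at this
      exact this
    rw [Set.mem_iUnion₂]
    exact ⟨(p.1, p.2 * m), Set.mem_image_of_mem _ hp,
      dynDist_iterate_lt hε hη hprop hball hm⟩

lemma weight_image_mul (hm : 1 ≤ m) (hs : 0 ≤ s) {S : Set (X × ℕ)} :
    coverWeight s ((fun p : X × ℕ => (p.1, p.2 * m)) '' S) ≤ coverWeight s S := by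
  set f : X × ℕ → X × ℕ := fun p => (p.1, p.2 * m) with hf
  have hσ : Function.Surjective
      (fun p : S => (⟨f p, Set.mem_image_of_mem f p.2⟩ : f '' S)) := by
    rintro ⟨q, hq⟩
    obtain ⟨p, hp, hpq⟩ := hq
    exact ⟨⟨p, hp⟩, Subtype.ext hpq⟩
  calc coverWeight s (f '' S)
      ≤ ∑' p : S, (((f p).2 : ℝ≥0∞))⁻¹ ^ s :=
        ENNReal.tsum_le_tsum_comp_of_surjective hσ _
    _ ≤ ∑' p : S, (((p : X × ℕ).2 : ℝ≥0∞))⁻¹ ^ s := by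
        refine ENNReal.tsum_le_tsum fun p => ?_
        refine ENNReal.rpow_le_rpow ?_ hs
        refine ENNReal.inv_le_inv.mpr ?_
        exact_mod_cast Nat.le_mul_of_pos_right _ hm

lemma dynDeltaSup_zero_of_zero_base (hφ : Continuous φ) (hm : 1 ≤ m) (hs : 0 ≤ s)
    (h : dynDeltaSup φ Set.univ ε s = 0) : dynDeltaSup (φ^[m]) Set.univ ε s = 0 := by
  rw [dynDeltaSup_eq_zero_iff] at h ⊢
  intro N hN
  have hN' : 1 ≤ max N 2 * m := le_trans hN (le_trans (le_max_left _ _)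
    (Nat.le_mul_of_pos_right _ hm))
  have h0 := h _ hN'
  refine le_antisymm (ENNReal.le_of_forall_pos_le_add fun r hr _ => ?_) zero_le
  rw [zero_add]
  set K := ((2 * m : ℕ) : ℝ≥0∞) ^ s with hK
  have hK0 : K ≠ 0 := by
    refine (ENNReal.rpow_pos ?_ (ENNReal.natCast_ne_top _)).ne'
    exact_mod_cast Nat.succ_le_of_lt (by omega : 0 < 2 * m)
  have hKt : K ≠ ⊤ := ENNReal.rpow_ne_top_of_nonneg hs (ENNReal.natCast_ne_top _)
  have hθ : 0 < (r : ℝ≥0∞) / K := ENNReal.div_pos (by exact_mod_cast hr.ne') hKt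
  obtain ⟨S, hScov, hSw⟩ := exists_cover_of_delta_zero h0 hθ
  have horder : ∀ p ∈ S, 2 * m ≤ p.2 := fun p hp =>
    le_trans (Nat.mul_le_mul_right m (le_max_right N 2)) (hScov.2.1 p hp)
  calc dynDelta (φ^[m]) Set.univ ε s N
      ≤ coverWeight s ((fun p : X × ℕ => (p.1, p.2 / m)) '' S) :=
        dynDelta_le_of_cover (isDynCover_image_div hm hScov)
    _ ≤ K * coverWeight s S := weight_image_div hm hs horder
    _ ≤ K * ((r : ℝ≥0∞) / K) := mul_le_mul_right hSw.le _
    _ = r := ENNReal.mul_div_cancel hK0 hKt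

lemma dynDeltaSup_zero_of_zero_iter (hφ : Continuous φ) (hm : 1 ≤ m) (hs : 0 ≤ s)
    (hε : 0 < ε) (hη : 0 < η)
    (hprop : ∀ x y : X, dist x y < η → ∀ j < m, dist (φ^[j] x) (φ^[j] y) < ε)
    (h : dynDeltaSup (φ^[m]) Set.univ η s = 0) : dynDeltaSup φ Set.univ ε s = 0 := by
  rw [dynDeltaSup_eq_zero_iff] at h ⊢
  intro N hN
  have h0 := h N hN
  refine le_antisymm (ENNReal.le_of_forall_pos_le_add fun r hr _ => ?_) zero_le
  rw [zero_add]
  obtain ⟨S, hScov, hSw⟩ := exists_cover_of_delta_zero h0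
    (by exact_mod_cast hr : (0:ℝ≥0∞) < r)
  calc dynDelta φ Set.univ ε s N
      ≤ coverWeight s ((fun p : X × ℕ => (p.1, p.2 * m)) '' S) :=
        dynDelta_le_of_cover (isDynCover_image_mul hm hε hη hprop hScov)
    _ ≤ coverWeight s S := weight_image_mul hm hs
    _ ≤ r := hSw.le

lemma weakComplexity_iterate (hφ : Continuous φ) (hm : 1 ≤ m) :
    weakComplexity (φ^[m]) Set.univ = weakComplexity φ Set.univ := by
  apply le_antisymm
  · refine iSup₂_le fun ε hε => ?_
    refine le_trans ?_ (le_iSup₂ (f := fun ε (_ : 0 < ε) => critVal φ Set.univ ε) ε hε)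
    refine sInf_le_sInf fun c hc => ?_
    obtain ⟨t, ht0, hct, hΔ⟩ := hc
    exact ⟨t, ht0, hct, dynDeltaSup_zero_of_zero_base hφ hm ht0 hΔ⟩
  · refine iSup₂_le fun ε hε => ?_
    obtain ⟨η, hη, hηε, hprop⟩ := exists_eta hφ hε m
    refine le_trans ?_ (le_iSup₂ (f := fun ε (_ : 0 < ε) => critVal (φ^[m]) Set.univ ε) η hη)
    refine sInf_le_sInf fun c hc => ?_
    obtain ⟨t, ht0, hct, hΔ⟩ := hc
    exact ⟨t, ht0, hct, dynDeltaSup_zero_of_zero_iter hφ hm ht0 hε hη hprop hΔ⟩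

end weak2

/-- for every `m ≥ 1`, `C(φ^m) = C(φ)`, `C̲(φ^m) = C̲(φ)` and `C*(φ^m) = C*(φ)`. -/
theorem complexity_iterate {X : Type*} [MetricSpace X] [CompactSpace X]
    (φ : X → X) (hφ : Continuous φ) (m : ℕ) (hm : 1 ≤ m) :
    upperComplexity (φ^[m]) Set.univ = upperComplexity φ Set.univ ∧
    lowerComplexity (φ^[m]) Set.univ = lowerComplexity φ Set.univ ∧
    weakComplexity (φ^[m]) Set.univ = weakComplexity φ Set.univ := by
  exact ⟨upperComplexity_iterate hφ hm, lowerComplexity_iterate hφ hm,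
    weakComplexity_iterate hφ hm⟩
end

section
/- Let (X,d) be a compact metric space and Φ : [0,+∞) × X → X a continuous semi-flow (Φ⁰ = id and Φˢ ∘ Φᵗ = Φ^{s+t} for all s,t ≥ 0), and let φ = Φ¹ be its time-one map. Then the continuous complexity index equals the discrete one: C_c(Φ) = C(φ). -/
open Filter Set Metric
open scoped ENNReal NNReal Topology

/-- The continuous-time dynamical distance `d_t^Φ(x,y) = sup_{0 ≤ τ ≤ t-1} d(Φ^τ x, Φ^τ y)`
associated with a semi-flow `Φ : [0,∞) × X → X`. -/
noncomputable def flowDist {X : Type*} [MetricSpace X] (Φ : ℝ≥0 × X → X) (t : ℝ)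
    (x y : X) : ℝ :=
  ⨆ τ : {τ : ℝ≥0 // (τ : ℝ) ≤ t - 1}, dist (Φ (τ.1, x)) (Φ (τ.1, y))

/-- The open ball of radius `ε` centered at `x` for the distance `d_t^Φ`. -/
def flowBall {X : Type*} [MetricSpace X] (Φ : ℝ≥0 × X → X) (t : ℝ) (x : X) (ε : ℝ) :
    Set X :=
  {y | flowDist Φ t x y < ε}

/-- `G_t^Φ(ε)`: the minimal number of `d_t^Φ`-balls of radius `ε` needed to cover `X`. -/
noncomputable def flowCoverNum {X : Type*} [MetricSpace X] (Φ : ℝ≥0 × X → X)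
    (t ε : ℝ) : ℕ :=
  sInf {m : ℕ | ∃ u : Finset X, u.card = m ∧ Set.univ ⊆ ⋃ x ∈ u, flowBall Φ t x ε}

/-- The continuous complexity index `C_c(Φ) = sup_{ε>0} limsup_{t→∞} log G_t^Φ(ε)/log t`. -/
noncomputable def flowComplexity {X : Type*} [MetricSpace X] (Φ : ℝ≥0 × X → X) : ℝ≥0∞ :=
  ⨆ (ε : ℝ) (_ : 0 < ε),
    Filter.limsup
      (fun t : ℝ => ENNReal.ofReal (Real.log (flowCoverNum Φ t ε) / Real.log t)) Filter.atTop


section Aux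

set_option linter.unusedSectionVars false

variable {X : Type*} [MetricSpace X] [CompactSpace X]

/-- A uniform bound on distances in a compact metric space. -/
lemma exists_dist_bound : ∃ C : ℝ, ∀ x y : X, dist x y ≤ C := by
  obtain ⟨C, hC⟩ := Metric.isBounded_iff.mp (isCompact_univ (X := X)).isBounded
  exact ⟨C, fun x y => hC (mem_univ x) (mem_univ y)⟩

variable (Φ : ℝ≥0 × X → X)

lemma flow_bddAbove (t : ℝ) (x y : X) :
    BddAbove (Set.range fun τ : {τ : ℝ≥0 // (τ : ℝ) ≤ t - 1} =>
      dist (Φ (τ.1, x)) (Φ (τ.1, y))) := by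
  obtain ⟨C, hC⟩ := Metric.isBounded_iff.mp (isCompact_univ (X := X)).isBounded
  exact ⟨C, by rintro _ ⟨τ, rfl⟩; exact hC (mem_univ _) (mem_univ _)⟩

lemma flowDist_self (t : ℝ) (x : X) : flowDist Φ t x x = 0 := by
  rcases isEmpty_or_nonempty {τ : ℝ≥0 // (τ : ℝ) ≤ t - 1} with h | h
  · exact Real.iSup_of_isEmpty _
  · simp [flowDist, dist_self]

variable {Φ}

lemma time_one_iterate (hid : ∀ x, Φ (0, x) = x)
    (hsemi : ∀ (s t : ℝ≥0) (x : X), Φ (s, Φ (t, x)) = Φ (s + t, x)) (k : ℕ) (x : X) :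
    (fun x => Φ (1, x))^[k] x = Φ ((k : ℝ≥0), x) := by
  induction k with
  | zero => simpa using (hid x).symm
  | succ k ih =>
      rw [Function.iterate_succ_apply', ih, hsemi]
      congr 1
      push_cast
      ring_nf

/-- Uniform continuity of the time ≤ 1 part of the flow. -/
lemma flow_unif (hΦ : Continuous Φ) {ε : ℝ} (hε : 0 < ε) :
    ∃ δ > 0, ∀ τ : ℝ≥0, τ ≤ 1 → ∀ x y : X, dist x y < δ →
      dist (Φ (τ, x)) (Φ (τ, y)) < ε := by
  haveI : CompactSpace {τ : ℝ≥0 // τ ≤ 1} := by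
    have h : IsCompact {τ : ℝ≥0 | τ ≤ 1} := by
      have : {τ : ℝ≥0 | τ ≤ 1} = Set.Icc 0 1 := by ext τ; simp [Set.mem_Icc]
      rw [this]; exact isCompact_Icc
    exact isCompact_iff_compactSpace.mp h
  have hg : Continuous fun p : {τ : ℝ≥0 // τ ≤ 1} × X => Φ (p.1.1, p.2) :=
    hΦ.comp ((continuous_subtype_val.comp continuous_fst).prodMk continuous_snd)
  have hu := CompactSpace.uniformContinuous_of_continuous hg
  obtain ⟨δ, hδ, H⟩ := Metric.uniformContinuous_iff.mp hu ε hε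
  refine ⟨δ, hδ, fun τ hτ x y hxy => ?_⟩
  have := H (a := (⟨τ, hτ⟩, x)) (b := (⟨τ, hτ⟩, y)) ?_
  · exact this
  · rw [Prod.dist_eq]
    simp only [dist_self]
    exact max_lt hδ hxy

end Aux

section S2
set_option linter.unusedSectionVars false
variable {X : Type*} [MetricSpace X] [CompactSpace X] {Φ : ℝ≥0 × X → X}

lemma dyn_bddAbove (φ : X → X) (n : ℕ) (x y : X) :
    BddAbove (Set.range fun k : Fin n => dist (φ^[(k : ℕ)] x) (φ^[(k : ℕ)] y)) :=
  (Set.finite_range _).bddAbove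

lemma dist_iterate_le_dynDist (φ : X → X) {n : ℕ} (k : Fin n) (x y : X) :
    dist (φ^[(k : ℕ)] x) (φ^[(k : ℕ)] y) ≤ dynDist φ n x y :=
  le_ciSup (dyn_bddAbove φ n x y) k

lemma dynDist_self (φ : X → X) (n : ℕ) (x : X) : dynDist φ n x x = 0 := by
  rcases Nat.eq_zero_or_pos n with rfl | hn
  · exact Real.iSup_of_isEmpty _
  · haveI : Nonempty (Fin n) := ⟨⟨0, hn⟩⟩
    simp [dynDist, dist_self]

/-- `d_n^φ ≤ d_t^Φ` when `n ≤ t`, where `φ` is the time-one map. -/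
lemma dynDist_le_flowDist (hid : ∀ x, Φ (0, x) = x)
    (hsemi : ∀ (s t : ℝ≥0) (x : X), Φ (s, Φ (t, x)) = Φ (s + t, x))
    {n : ℕ} (hn : 1 ≤ n) {t : ℝ} (ht : (n : ℝ) ≤ t) (x y : X) :
    dynDist (fun x => Φ (1, x)) n x y ≤ flowDist Φ t x y := by
  haveI : Nonempty (Fin n) := ⟨⟨0, hn⟩⟩
  refine ciSup_le fun k => ?_
  have hk : ((k : ℝ≥0) : ℝ) ≤ t - 1 := by
    have h1 : ((k : ℕ) : ℝ) + 1 ≤ (n : ℝ) := by exact_mod_cast Nat.succ_le_of_lt k.2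
    simp only [NNReal.coe_natCast]
    linarith
  calc dist ((fun x => Φ (1, x))^[(k : ℕ)] x) ((fun x => Φ (1, x))^[(k : ℕ)] y)
      = dist (Φ ((k : ℝ≥0), x)) (Φ ((k : ℝ≥0), y)) := by
        rw [time_one_iterate hid hsemi, time_one_iterate hid hsemi]
    _ ≤ flowDist Φ t x y := le_ciSup (flow_bddAbove Φ t x y) ⟨(k : ℝ≥0), hk⟩

/-- `d_t^Φ ≤ ε` on a small `d_n^φ`-ball, when `t ≤ n`. -/
lemma flowDist_le_of_dynDist_lt (hid : ∀ x, Φ (0, x) = x)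
    (hsemi : ∀ (s t : ℝ≥0) (x : X), Φ (s, Φ (t, x)) = Φ (s + t, x))
    {δ ε : ℝ} (hε : 0 ≤ ε)
    (hδ : ∀ τ : ℝ≥0, τ ≤ 1 → ∀ x y : X, dist x y < δ → dist (Φ (τ, x)) (Φ (τ, y)) < ε)
    {n : ℕ} {t : ℝ} (ht : t ≤ n) {x y : X}
    (hxy : dynDist (fun x => Φ (1, x)) n x y < δ) :
    flowDist Φ t x y ≤ ε := by
  rcases isEmpty_or_nonempty {τ : ℝ≥0 // (τ : ℝ) ≤ t - 1} with h | h
  · rw [flowDist, Real.iSup_of_isEmpty]; exact hε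
  refine ciSup_le fun ⟨τ, hτ⟩ => ?_
  set k : ℕ := ⌊τ⌋₊ with hk
  have hkτ : (k : ℝ≥0) ≤ τ := Nat.floor_le (zero_le : (0 : ℝ≥0) ≤ τ)
  have hkn : k < n := by
    have h1 : ((k : ℝ≥0) : ℝ) ≤ (τ : ℝ) := hkτ
    have h2 : ((k : ℕ) : ℝ) < (n : ℝ) := by
      simp only [NNReal.coe_natCast] at h1
      linarith
    exact_mod_cast h2
  set r : ℝ≥0 := τ - (k : ℝ≥0) with hr
  have hr1 : r ≤ 1 := by
    have := Nat.lt_floor_add_one τ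
    rw [hr]
    exact tsub_le_iff_right.mpr (by push_cast; exact le_of_lt (by rw [add_comm]; exact this))
  have hrk : r + (k : ℝ≥0) = τ := tsub_add_cancel_of_le hkτ
  have hdist : dist ((fun x => Φ (1, x))^[k] x) ((fun x => Φ (1, x))^[k] y) < δ :=
    lt_of_le_of_lt (dist_iterate_le_dynDist _ ⟨k, hkn⟩ x y) hxy
  have : dist (Φ (τ, x)) (Φ (τ, y)) < ε := by
    rw [← hrk, ← hsemi r (k : ℝ≥0) x, ← hsemi r (k : ℝ≥0) y,
      ← time_one_iterate hid hsemi, ← time_one_iterate hid hsemi]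
    exact hδ r hr1 _ _ hdist
  exact this.le

lemma dynBall_eq {φ : X → X} {n : ℕ} (hn : 1 ≤ n) (x : X) {ε : ℝ} (hε : 0 < ε) :
    dynBall φ n x ε = ⋂ k : Fin n, (φ^[(k : ℕ)]) ⁻¹' Metric.ball (φ^[(k : ℕ)] x) ε := by
  haveI : Nonempty (Fin n) := ⟨⟨0, hn⟩⟩
  ext y
  simp only [dynBall, Set.mem_setOf_eq, Set.mem_iInter, Set.mem_preimage, Metric.mem_ball]
  constructor
  · intro h k
    rw [dist_comm]
    exact lt_of_le_of_lt (dist_iterate_le_dynDist φ k x y) h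
  · intro h
    obtain ⟨k0, hk0⟩ := Finite.exists_max fun k : Fin n => dist (φ^[(k : ℕ)] x) (φ^[(k : ℕ)] y)
    refine lt_of_le_of_lt (ciSup_le hk0) ?_
    rw [dist_comm]
    exact h k0

lemma isOpen_dynBall {φ : X → X} (hφ : Continuous φ) {n : ℕ} (hn : 1 ≤ n) (x : X)
    {ε : ℝ} (hε : 0 < ε) : IsOpen (dynBall φ n x ε) := by
  rw [dynBall_eq hn x hε]
  exact isOpen_iInter_of_finite fun k => (Metric.isOpen_ball).preimage (hφ.iterate _)

lemma exists_dyn_cover {φ : X → X} (hφ : Continuous φ) {n : ℕ} (hn : 1 ≤ n)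
    {δ : ℝ} (hδ : 0 < δ) :
    ∃ u : Finset X, Set.univ ⊆ ⋃ x ∈ u, dynBall φ n x δ := by
  obtain ⟨u, hu⟩ := isCompact_univ.elim_finite_subcover (fun x : X => dynBall φ n x δ)
    (fun x => isOpen_dynBall hφ hn x hδ)
    (fun x _ => Set.mem_iUnion.mpr ⟨x, by simp [dynBall, dynDist_self, hδ]⟩)
  exact ⟨u, hu⟩

/-- Generic comparison of covering numbers. -/
lemma sInf_card_le_sInf_card {A B : X → Set X} (h : ∀ x, A x ⊆ B x)
    (hne : ∃ u : Finset X, Set.univ ⊆ ⋃ x ∈ u, A x) :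
    sInf {m : ℕ | ∃ u : Finset X, u.card = m ∧ Set.univ ⊆ ⋃ x ∈ u, B x}
      ≤ sInf {m : ℕ | ∃ u : Finset X, u.card = m ∧ Set.univ ⊆ ⋃ x ∈ u, A x} := by
  obtain ⟨u0, hu0⟩ := hne
  have hA : {m : ℕ | ∃ u : Finset X, u.card = m ∧ Set.univ ⊆ ⋃ x ∈ u, A x}.Nonempty :=
    ⟨u0.card, u0, rfl, hu0⟩
  obtain ⟨u, hcard, hcov⟩ := Nat.sInf_mem hA
  exact Nat.sInf_le ⟨u, hcard, hcov.trans (Set.iUnion₂_mono fun x _ => h x)⟩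

end S2

section S3
set_option linter.unusedSectionVars false
variable {X : Type*} [MetricSpace X] [CompactSpace X] {Φ : ℝ≥0 × X → X}

lemma coverNum_le_flowCoverNum (hΦ : Continuous Φ) (hid : ∀ x, Φ (0, x) = x)
    (hsemi : ∀ (s t : ℝ≥0) (x : X), Φ (s, Φ (t, x)) = Φ (s + t, x))
    {ε : ℝ} (hε : 0 < ε) {n : ℕ} (hn : 1 ≤ n) :
    coverNum (fun x => Φ (1, x)) n Set.univ ε ≤ flowCoverNum Φ (n : ℝ) ε := by
  have hsub : ∀ x, flowBall Φ (n : ℝ) x ε ⊆ dynBall (fun x => Φ (1, x)) n x ε := fun x y hy =>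
    lt_of_le_of_lt (dynDist_le_flowDist hid hsemi hn le_rfl x y) hy
  have hφcont : Continuous fun x => Φ (1, x) :=
    hΦ.comp (continuous_const.prodMk continuous_id)
  obtain ⟨δ, hδpos, hδ⟩ := flow_unif hΦ (half_pos hε)
  obtain ⟨u, hu⟩ := exists_dyn_cover hφcont hn hδpos
  have hflowcov : Set.univ ⊆ ⋃ x ∈ u, flowBall Φ (n : ℝ) x ε :=
    hu.trans (Set.iUnion₂_mono fun x _ y hy =>
      lt_of_le_of_lt
        (flowDist_le_of_dynDist_lt hid hsemi (half_pos hε).le hδ le_rfl hy)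
        (half_lt_self hε))
  exact sInf_card_le_sInf_card hsub ⟨u, hflowcov⟩

lemma flowCoverNum_le_coverNum (hid : ∀ x, Φ (0, x) = x)
    (hsemi : ∀ (s t : ℝ≥0) (x : X), Φ (s, Φ (t, x)) = Φ (s + t, x))
    (hφcont : Continuous fun x => Φ (1, x))
    {ε δ : ℝ} (hε : 0 < ε) (hδpos : 0 < δ)
    (hδ : ∀ τ : ℝ≥0, τ ≤ 1 → ∀ x y : X, dist x y < δ →
      dist (Φ (τ, x)) (Φ (τ, y)) < ε / 2)
    {t : ℝ} {n : ℕ} (hn : 1 ≤ n) (ht : t ≤ n) :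
    flowCoverNum Φ t ε ≤ coverNum (fun x => Φ (1, x)) n Set.univ δ := by
  refine sInf_card_le_sInf_card (fun x y hy => ?_) (exists_dyn_cover hφcont hn hδpos)
  exact lt_of_le_of_lt
    (flowDist_le_of_dynDist_lt hid hsemi (half_pos hε).le hδ ht hy) (half_lt_self hε)

lemma log_nat_mono {m k : ℕ} (h : m ≤ k) : Real.log m ≤ Real.log k := by
  rcases Nat.eq_zero_or_pos m with rfl | hm
  · simpa using Real.log_natCast_nonneg k
  · exact Real.log_le_log (by exact_mod_cast hm) (by exact_mod_cast h)

lemma log_ratio_eventually {κ : ℝ} (hκ : 1 < κ) :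
    ∀ᶠ n : ℕ in Filter.atTop, Real.log n ≤ κ * Real.log ((n : ℝ) - 1) := by
  have hev : ∀ᶠ n : ℕ in Filter.atTop,
      max 3 (Real.exp (Real.log 2 / (κ - 1)) + 1) ≤ (n : ℝ) :=
    tendsto_natCast_atTop_atTop.eventually (Filter.eventually_ge_atTop _)
  filter_upwards [hev] with n hn
  have h3 : (3 : ℝ) ≤ (n : ℝ) := le_trans (le_max_left _ _) hn
  have hexp : Real.exp (Real.log 2 / (κ - 1)) ≤ (n : ℝ) - 1 := by
    have := le_trans (le_max_right _ _) hn; linarith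
  have hκ1 : 0 < κ - 1 := by linarith
  have hlog2 : Real.log 2 / (κ - 1) ≤ Real.log ((n : ℝ) - 1) := by
    calc Real.log 2 / (κ - 1) = Real.log (Real.exp (Real.log 2 / (κ - 1))) :=
          (Real.log_exp _).symm
      _ ≤ Real.log ((n : ℝ) - 1) := Real.log_le_log (Real.exp_pos _) hexp
  have hlog2' : Real.log 2 ≤ (κ - 1) * Real.log ((n : ℝ) - 1) := by
    rw [div_le_iff₀ hκ1] at hlog2; linarith [hlog2]
  have hmono : Real.log (n : ℝ) ≤ Real.log 2 + Real.log ((n : ℝ) - 1) := by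
    have h1 : (n : ℝ) ≤ 2 * ((n : ℝ) - 1) := by linarith
    calc Real.log (n : ℝ) ≤ Real.log (2 * ((n : ℝ) - 1)) :=
          Real.log_le_log (by linarith) h1
      _ = Real.log 2 + Real.log ((n : ℝ) - 1) :=
          Real.log_mul (by norm_num) (by linarith)
  linarith

lemma dirA (hΦ : Continuous Φ) (hid : ∀ x, Φ (0, x) = x)
    (hsemi : ∀ (s t : ℝ≥0) (x : X), Φ (s, Φ (t, x)) = Φ (s + t, x))
    {ε : ℝ} (hε : 0 < ε) :
    Filter.limsup (fun n : ℕ => ENNReal.ofReal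
        (Real.log (coverNum (fun x => Φ (1, x)) n Set.univ ε) / Real.log n)) Filter.atTop
      ≤ Filter.limsup (fun t : ℝ => ENNReal.ofReal
        (Real.log (flowCoverNum Φ t ε) / Real.log t)) Filter.atTop := by
  set b : ℝ → ℝ≥0∞ := fun t =>
    ENNReal.ofReal (Real.log (flowCoverNum Φ t ε) / Real.log t) with hb
  have hev : ∀ᶠ n : ℕ in Filter.atTop,
      ENNReal.ofReal (Real.log (coverNum (fun x => Φ (1, x)) n Set.univ ε) / Real.log n)
        ≤ (b ∘ (Nat.cast : ℕ → ℝ)) n := by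
    filter_upwards [Filter.eventually_ge_atTop 1] with n hn
    simp only [Function.comp, hb]
    apply ENNReal.ofReal_le_ofReal
    rcases eq_or_lt_of_le (Real.log_natCast_nonneg n) with h0 | h0
    · rw [← h0, div_zero, div_zero]
    · refine div_le_div_of_nonneg_right ?_ h0.le
      exact log_nat_mono (coverNum_le_flowCoverNum hΦ hid hsemi hε hn)
  calc Filter.limsup (fun n : ℕ => ENNReal.ofReal
        (Real.log (coverNum (fun x => Φ (1, x)) n Set.univ ε) / Real.log n)) Filter.atTop
      ≤ Filter.limsup (b ∘ (Nat.cast : ℕ → ℝ)) Filter.atTop := Filter.limsup_le_limsup hev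
    _ = Filter.limsup b (Filter.map (Nat.cast : ℕ → ℝ) Filter.atTop) :=
        Filter.limsup_comp b _ _
    _ ≤ Filter.limsup b Filter.atTop :=
        Filter.limsup_le_limsup_of_le tendsto_natCast_atTop_atTop

end S3

section S4
set_option linter.unusedSectionVars false
variable {X : Type*} [MetricSpace X] [CompactSpace X] {Φ : ℝ≥0 × X → X}

lemma dirB (hΦ : Continuous Φ) (hid : ∀ x, Φ (0, x) = x)
    (hsemi : ∀ (s t : ℝ≥0) (x : X), Φ (s, Φ (t, x)) = Φ (s + t, x))
    {ε : ℝ} (hε : 0 < ε) :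
    ∃ δ : ℝ, 0 < δ ∧
      Filter.limsup (fun t : ℝ => ENNReal.ofReal
          (Real.log (flowCoverNum Φ t ε) / Real.log t)) Filter.atTop
        ≤ Filter.limsup (fun n : ℕ => ENNReal.ofReal
          (Real.log (coverNum (fun x => Φ (1, x)) n Set.univ δ) / Real.log n)) Filter.atTop := by
  obtain ⟨δ, hδpos, hδ⟩ := flow_unif hΦ (half_pos hε)
  have hφcont : Continuous fun x => Φ (1, x) :=
    hΦ.comp (continuous_const.prodMk continuous_id)
  refine ⟨δ, hδpos, ?_⟩
  set a : ℕ → ℝ≥0∞ := fun n => ENNReal.ofReal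
    (Real.log (coverNum (fun x => Φ (1, x)) n Set.univ δ) / Real.log n) with ha
  set L := Filter.limsup a Filter.atTop with hL
  refine le_of_forall_gt_imp_ge_of_dense fun x hx => ?_
  rcases eq_or_ne x ⊤ with rfl | hxt
  · exact le_top
  obtain ⟨y, hy1, hy2⟩ := exists_between hx
  have hyt : y ≠ ⊤ := (hy2.trans (lt_top_iff_ne_top.mpr hxt)).ne
  have hy0 : y ≠ 0 := by
    intro h; rw [h] at hy1; exact (not_lt_of_ge (zero_le : (0 : ℝ≥0∞) ≤ L)) hy1
  set r : ℝ := y.toReal with hr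
  set s : ℝ := x.toReal with hs
  have hrpos : 0 < r := ENNReal.toReal_pos hy0 hyt
  have hrs : r < s := (ENNReal.toReal_lt_toReal hyt hxt).mpr hy2
  set κ : ℝ := s / r with hκdef
  have hκ : 1 < κ := (one_lt_div hrpos).mpr hrs
  have hA : ∀ᶠ n : ℕ in Filter.atTop, a n < y := eventually_lt_of_limsup_lt hy1
  have h3ev : ∀ᶠ n : ℕ in Filter.atTop, (3 : ℝ) ≤ (n : ℝ) :=
    tendsto_natCast_atTop_atTop.eventually (Filter.eventually_ge_atTop 3)
  have hC : ∀ᶠ n : ℕ in Filter.atTop, ENNReal.ofReal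
      (Real.log (coverNum (fun x => Φ (1, x)) n Set.univ δ) / Real.log ((n : ℝ) - 1)) ≤ x := by
    filter_upwards [hA, log_ratio_eventually hκ, h3ev] with n han hκn h3
    set G : ℕ := coverNum (fun x => Φ (1, x)) n Set.univ δ with hG
    have hlogn : 0 < Real.log (n : ℝ) := Real.log_pos (by linarith)
    have hlogn1 : 0 < Real.log ((n : ℝ) - 1) := Real.log_pos (by linarith)
    have han' : Real.log G / Real.log (n : ℝ) ≤ r := by
      have : a n ≤ ENNReal.ofReal r := by
        rw [hr, ENNReal.ofReal_toReal hyt]; exact han.le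
      exact (ENNReal.ofReal_le_ofReal_iff hrpos.le).mp this
    have hGn : Real.log G ≤ r * Real.log (n : ℝ) := by
      rw [div_le_iff₀ hlogn] at han'; linarith
    have hGs : Real.log G ≤ s * Real.log ((n : ℝ) - 1) := by
      have h1 : r * Real.log (n : ℝ) ≤ r * (κ * Real.log ((n : ℝ) - 1)) :=
        mul_le_mul_of_nonneg_left hκn hrpos.le
      have h2 : r * κ = s := by rw [hκdef]; field_simp [hrpos.ne']
      calc Real.log G ≤ r * Real.log (n : ℝ) := hGn
        _ ≤ r * (κ * Real.log ((n : ℝ) - 1)) := h1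
        _ = s * Real.log ((n : ℝ) - 1) := by rw [← mul_assoc, h2]
    have : Real.log G / Real.log ((n : ℝ) - 1) ≤ s := by
      rw [div_le_iff₀ hlogn1]; linarith
    calc ENNReal.ofReal (Real.log G / Real.log ((n : ℝ) - 1)) ≤ ENNReal.ofReal s :=
          ENNReal.ofReal_le_ofReal this
      _ = x := by rw [hs, ENNReal.ofReal_toReal hxt]
  obtain ⟨N, hN⟩ := Filter.eventually_atTop.mp hC
  refine Filter.limsup_le_of_le ?_ ?_
  · isBoundedDefault
  filter_upwards [Filter.eventually_ge_atTop ((max N 3 : ℕ) : ℝ)] with t htt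
  set n : ℕ := ⌈t⌉₊ with hn
  have ht3 : (3 : ℝ) ≤ t := le_trans (by exact_mod_cast le_max_right N 3) htt
  have ht0 : 0 ≤ t := by linarith
  have hnt : t ≤ (n : ℕ) := Nat.le_ceil t
  have hn3 : 3 ≤ n := by
    have : (3 : ℝ) ≤ (n : ℝ) := le_trans ht3 hnt
    exact_mod_cast this
  have hnN : N ≤ n := by
    have h1 : ((N : ℕ) : ℝ) ≤ t := le_trans (by exact_mod_cast le_max_left N 3) htt
    have : ((N : ℕ) : ℝ) ≤ (n : ℝ) := le_trans h1 hnt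
    exact_mod_cast this
  have hn1r : (n : ℝ) - 1 ≤ t := by
    have := Nat.ceil_lt_add_one ht0
    linarith [this]
  have hlogt : 0 < Real.log t := Real.log_pos (by linarith)
  have hlogn1 : 0 < Real.log ((n : ℝ) - 1) := by
    refine Real.log_pos ?_
    have : (3 : ℝ) ≤ (n : ℝ) := by exact_mod_cast hn3
    linarith
  have hflow : flowCoverNum Φ t ε ≤ coverNum (fun x => Φ (1, x)) n Set.univ δ :=
    flowCoverNum_le_coverNum hid hsemi hφcont hε hδpos hδ (by omega) hnt
  calc ENNReal.ofReal (Real.log (flowCoverNum Φ t ε) / Real.log t)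
      ≤ ENNReal.ofReal
        (Real.log (coverNum (fun x => Φ (1, x)) n Set.univ δ) / Real.log t) :=
        ENNReal.ofReal_le_ofReal
          (div_le_div_of_nonneg_right (log_nat_mono hflow) hlogt.le)
    _ ≤ ENNReal.ofReal
        (Real.log (coverNum (fun x => Φ (1, x)) n Set.univ δ) / Real.log ((n : ℝ) - 1)) :=
        ENNReal.ofReal_le_ofReal
          (div_le_div_of_nonneg_left (Real.log_natCast_nonneg _) hlogn1
            (Real.log_le_log (by linarith) hn1r))
    _ ≤ x := hN n hnN

end S4

/-- for a continuous semi-flow `Φ` on a compact metric space with time-one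
map `φ = Φ¹`, the continuous complexity index equals the discrete one: `C_c(Φ) = C(φ)`. -/
theorem flowComplexity_eq_upperComplexity {X : Type*} [MetricSpace X] [CompactSpace X]
    (Φ : ℝ≥0 × X → X) (hΦ : Continuous Φ)
    (hid : ∀ x, Φ (0, x) = x)
    (hsemi : ∀ (s t : ℝ≥0) (x : X), Φ (s, Φ (t, x)) = Φ (s + t, x)) :
    flowComplexity Φ = upperComplexity (fun x => Φ (1, x)) Set.univ := by
  apply le_antisymm
  · refine iSup₂_le fun ε hε => ?_
    obtain ⟨δ, hδ, hle⟩ := dirB hΦ hid hsemi hε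
    refine hle.trans ?_
    exact le_iSup₂ (f := fun (δ : ℝ) (_ : 0 < δ) =>
      Filter.limsup (fun n : ℕ => ENNReal.ofReal
        (Real.log (coverNum (fun x => Φ (1, x)) n Set.univ δ) / Real.log n))
        Filter.atTop) δ hδ
  · refine iSup₂_le fun ε hε => ?_
    refine (dirA hΦ hid hsemi hε).trans ?_
    exact le_iSup₂ (f := fun (ε : ℝ) (_ : 0 < ε) =>
      Filter.limsup (fun t : ℝ => ENNReal.ofReal
        (Real.log (flowCoverNum Φ t ε) / Real.log t)) Filter.atTop) ε hε
end
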